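/- The class of finite graphs embeddable into some recursive blow-up of the 4-cycle is closed under substitution: if F_1 embeds as an induced subgraph into C_4^(ℓ_1), F_2 embeds as an induced subgraph into C_4^(ℓ_2), and v ∈ V(F_1), then the substitution F_1^(v→F_2) embeds as an induced subgraph into C_4^(ℓ_1+ℓ_2). -/

import Mathlib

/-- The recursive blow-up of the 4-cycle of height `ℓ`: vertices are `[4]^ℓ`, and
distinct `σ, τ` are adjacent iff `σ i - τ i ≡ ±1 (mod 4)` where `i` is the first
position at which they differ. -/
def C4blow (ℓ : ℕ) : SimpleGraph (Fin ℓ → ZMod 4) where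
  Adj σ τ := ∃ i : Fin ℓ, (∀ j, j < i → σ j = τ j) ∧ (σ i - τ i = 1 ∨ σ i - τ i = 3)
  symm := by
    constructor
    rintro σ τ ⟨i, h, hd⟩
    refine ⟨i, fun j hj => (h j hj).symm, ?_⟩
    have hneg : τ i - σ i = -(σ i - τ i) := by ring
    rcases hd with h1 | h3
    · right; rw [hneg, h1]; decide
    · left; rw [hneg, h3]; decide
  loopless := by
    constructor
    rintro σ ⟨i, -, hd⟩
    rcases hd with h | h <;> rw [sub_self] at h <;> exact absurd h (by decide)
/-- Substitution of the graph `F₂` for the vertex `v` of the graph `F₁`. -/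
def subst {V₁ V₂ : Type*} (F₁ : SimpleGraph V₁) (F₂ : SimpleGraph V₂) (v : V₁) :
    SimpleGraph ({w : V₁ // w ≠ v} ⊕ V₂) where
  Adj a b :=
    match a, b with
    | Sum.inl w, Sum.inl w' => F₁.Adj w.1 w'.1
    | Sum.inl w, Sum.inr _ => F₁.Adj w.1 v
    | Sum.inr _, Sum.inl w => F₁.Adj w.1 v
    | Sum.inr u, Sum.inr u' => F₂.Adj u u'
  symm := by
    constructor
    rintro (w | u) (w' | u') h
    · exact h.symm
    · exact h
    · exact h
    · exact h.symm
  loopless := by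
    constructor
    rintro (w | u) h
    · exact F₁.loopless.irrefl _ h
    · exact F₂.loopless.irrefl _ h
lemma adj_append_left {ℓ₁ ℓ₂ : ℕ} {a b : Fin ℓ₁ → ZMod 4} {c d : Fin ℓ₂ → ZMod 4}
    (hab : a ≠ b) :
    (C4blow (ℓ₁+ℓ₂)).Adj (Fin.append a c) (Fin.append b d) ↔ (C4blow ℓ₁).Adj a b := by
  constructor
  · rintro ⟨i, h, hd⟩
    by_cases hi : (i : ℕ) < ℓ₁
    · have hie : i = Fin.castAdd ℓ₂ ⟨(i : ℕ), hi⟩ := Fin.ext rfl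
      refine ⟨⟨(i : ℕ), hi⟩, fun j hj => ?_, ?_⟩
      · have := h (Fin.castAdd ℓ₂ j) (by simpa [Fin.lt_def] using hj)
        simpa [Fin.append_left] using this
      · rw [hie, Fin.append_left, Fin.append_left] at hd
        exact hd
    · exfalso
      apply hab
      funext j
      have := h (Fin.castAdd ℓ₂ j) (by simp [Fin.lt_def]; omega)
      simpa [Fin.append_left] using this
  · rintro ⟨i, h, hd⟩
    refine ⟨Fin.castAdd ℓ₂ i, fun j hj => ?_, by simpa [Fin.append_left] using hd⟩
    have hj' : (j : ℕ) < ℓ₁ := lt_trans (by simpa [Fin.lt_def] using hj) i.2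
    have hje : j = Fin.castAdd ℓ₂ ⟨(j : ℕ), hj'⟩ := Fin.ext rfl
    rw [hje, Fin.append_left, Fin.append_left]
    exact h ⟨(j : ℕ), hj'⟩ (by simpa [Fin.lt_def] using hj)

lemma adj_append_right {ℓ₁ ℓ₂ : ℕ} {a : Fin ℓ₁ → ZMod 4} {c d : Fin ℓ₂ → ZMod 4} :
    (C4blow (ℓ₁+ℓ₂)).Adj (Fin.append a c) (Fin.append a d) ↔ (C4blow ℓ₂).Adj c d := by
  constructor
  · rintro ⟨i, h, hd⟩
    have hi : ¬ (i : ℕ) < ℓ₁ := by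
      intro hi
      have hie : i = Fin.castAdd ℓ₂ ⟨(i : ℕ), hi⟩ := Fin.ext rfl
      rw [hie, Fin.append_left, Fin.append_left, sub_self] at hd
      rcases hd with h' | h' <;> exact absurd h' (by decide)
    have hi2 : (i : ℕ) - ℓ₁ < ℓ₂ := by omega
    have hie : i = Fin.natAdd ℓ₁ ⟨(i : ℕ) - ℓ₁, hi2⟩ := Fin.ext (by simp; omega)
    refine ⟨⟨(i : ℕ) - ℓ₁, hi2⟩, fun j hj => ?_, ?_⟩
    · have := h (Fin.natAdd ℓ₁ j) (by simp [Fin.lt_def] at hj ⊢; omega)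
      simpa [Fin.append_right] using this
    · rw [hie, Fin.append_right, Fin.append_right] at hd
      exact hd
  · rintro ⟨i, h, hd⟩
    refine ⟨Fin.natAdd ℓ₁ i, fun j hj => ?_, by simpa [Fin.append_right] using hd⟩
    by_cases hj' : (j : ℕ) < ℓ₁
    · have hje : j = Fin.castAdd ℓ₂ ⟨(j : ℕ), hj'⟩ := Fin.ext rfl
      rw [hje, Fin.append_left, Fin.append_left]
    · have hj2 : (j : ℕ) - ℓ₁ < ℓ₂ := by omega
      have hje : j = Fin.natAdd ℓ₁ ⟨(j : ℕ) - ℓ₁, hj2⟩ := Fin.ext (by simp; omega)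
      rw [hje, Fin.append_right, Fin.append_right]
      exact h _ (by simp [Fin.lt_def] at hj ⊢; omega)

lemma append_left_inj {ℓ₁ ℓ₂ : ℕ} {a b : Fin ℓ₁ → ZMod 4} {c d : Fin ℓ₂ → ZMod 4}
    (h : Fin.append a c = Fin.append b d) : a = b ∧ c = d := by
  constructor
  · funext j
    have := congrFun h (Fin.castAdd ℓ₂ j)
    simpa [Fin.append_left] using this
  · funext j
    have := congrFun h (Fin.natAdd ℓ₁ j)
    simpa [Fin.append_right] using this

/-- the class of induced subgraphs of recursive blow-ups of $C_4$ is
closed under substitution. -/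
theorem subst_embeds_C4blow {V₁ V₂ : Type*} (F₁ : SimpleGraph V₁) (F₂ : SimpleGraph V₂)
    (ℓ₁ ℓ₂ : ℕ) (α : F₁ ↪g C4blow ℓ₁) (β : F₂ ↪g C4blow ℓ₂) (v : V₁) :
    Nonempty (subst F₁ F₂ v ↪g C4blow (ℓ₁ + ℓ₂)) := by
  refine ⟨⟨⟨fun a => match a with
    | Sum.inl w => Fin.append (α w.1) (fun _ => 1)
    | Sum.inr u => Fin.append (α v) (β u), ?_⟩, ?_⟩⟩
  · rintro (w | u) (w' | u') h <;> simp only at h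
    · exact congrArg Sum.inl (Subtype.ext (α.injective (append_left_inj h).1))
    · exact absurd (α.injective (append_left_inj h).1) w.2
    · exact absurd (α.injective (append_left_inj h).1).symm w'.2
    · exact congrArg Sum.inr (β.injective (append_left_inj h).2)
  · rintro (w | u) (w' | u') <;>
      simp only [Function.Embedding.coeFn_mk, subst]
    all_goals erw [Function.Embedding.coeFn_mk]
    all_goals simp only
    · by_cases hww : w = w'
      · subst hww
        simp only [SimpleGraph.irrefl, iff_false]
      · have hab : α w.1 ≠ α w'.1 := fun h => hww (Subtype.ext (α.injective h))
        rw [adj_append_left hab, α.map_adj_iff]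
    · have hab : α w.1 ≠ α v := fun h => w.2 (α.injective h)
      rw [adj_append_left hab, α.map_adj_iff]
    · have hab : α v ≠ α w'.1 := fun h => w'.2 (α.injective h).symm
      rw [adj_append_left hab]
      exact ⟨fun h => (α.map_adj_iff.mp h).symm, fun h => α.map_adj_iff.mpr h.symm⟩
    · rw [adj_append_right, β.map_adj_iff]
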